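/- Let T : X → X be a bounded operator on a real Banach space X. Then ‖exp(−αT)‖ ≤ 1 for all α ≥ 0 if and only if for every x ∈ X and every norming functional x* for x one has x*(Tx) ≥ 0. -/

import Mathlib

open NormedSpace

section auxsec

variable {X : Type*} [NormedAddCommGroup X] [NormedSpace ℝ X] [CompleteSpace X]

lemma exp_tail_bound' (A : X →L[ℝ] X) :
    ‖exp A - 1 - A‖ ≤ ‖A‖ ^ 2 * Real.exp ‖A‖ := by
  have h := exp_series_hasSum_exp' (𝕂 := ℝ) A
  have h2 : HasSum (fun n : ℕ => ((Nat.factorial (n + 2) : ℝ))⁻¹ • A ^ (n + 2))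
      (exp A - ∑ i ∈ Finset.range 2, ((Nat.factorial i : ℝ))⁻¹ • A ^ i) :=
    (hasSum_nat_add_iff' 2).mpr h
  have hrange : (∑ i ∈ Finset.range 2, ((Nat.factorial i : ℝ))⁻¹ • A ^ i) = 1 + A := by
    simp [Finset.sum_range_succ]
  rw [hrange] at h2
  have hb : ∀ n : ℕ, ‖((Nat.factorial (n + 2) : ℝ))⁻¹ • A ^ (n + 2)‖ ≤ ‖A‖ ^ 2 * (‖A‖ ^ n / Nat.factorial n) := by
    intro n
    rw [norm_smul (α := ℝ) (β := X →L[ℝ] X), Real.norm_eq_abs, abs_inv, abs_of_nonneg (by positivity)]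
    have h1 : ((Nat.factorial n : ℝ)) ≤ (Nat.factorial (n + 2) : ℝ) := by
      exact_mod_cast Nat.factorial_le (by omega)
    have h2' : ((Nat.factorial (n + 2) : ℝ))⁻¹ ≤ ((Nat.factorial n : ℝ))⁻¹ :=
      inv_anti₀ (by positivity) h1
    have h3 : ‖A ^ (n + 2)‖ ≤ ‖A‖ ^ (n + 2) := norm_pow_le' A (by omega)
    calc ((Nat.factorial (n + 2) : ℝ))⁻¹ * ‖A ^ (n + 2)‖
        ≤ ((Nat.factorial n : ℝ))⁻¹ * ‖A‖ ^ (n + 2) := by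
          exact mul_le_mul h2' h3 (norm_nonneg _) (by positivity)
      _ = ‖A‖ ^ 2 * (‖A‖ ^ n / Nat.factorial n) := by ring
  have hsg : Summable fun n : ℕ => ‖A‖ ^ 2 * (‖A‖ ^ n / Nat.factorial n) :=
    (Real.summable_pow_div_factorial ‖A‖).mul_left _
  have hsf : Summable fun n : ℕ => ‖((Nat.factorial (n + 2) : ℝ))⁻¹ • A ^ (n + 2)‖ :=
    Summable.of_nonneg_of_le (fun n => norm_nonneg _) hb hsg
  have heq : exp A - 1 - A = ∑' n : ℕ, ((Nat.factorial (n + 2) : ℝ))⁻¹ • A ^ (n + 2) := by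
    rw [h2.tsum_eq, sub_sub]
  rw [heq]
  calc ‖∑' n : ℕ, ((Nat.factorial (n + 2) : ℝ))⁻¹ • A ^ (n + 2)‖
      ≤ ∑' n : ℕ, ‖((Nat.factorial (n + 2) : ℝ))⁻¹ • A ^ (n + 2)‖ := norm_tsum_le_tsum_norm hsf
    _ ≤ ∑' n : ℕ, ‖A‖ ^ 2 * (‖A‖ ^ n / Nat.factorial n) := Summable.tsum_le_tsum hb hsf hsg
    _ = ‖A‖ ^ 2 * ∑' n : ℕ, (‖A‖ ^ n / Nat.factorial n) := tsum_mul_left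
    _ = ‖A‖ ^ 2 * Real.exp ‖A‖ := by
        congr 1
        rw [Real.exp_eq_exp_ℝ, exp_eq_tsum_div]

/-- Dissipativity implies `‖x‖ ≤ ‖x + s • T x‖` for `s ≥ 0`. -/
lemma diss_ineq (T : X →L[ℝ] X)
    (hd : ∀ (x : X) (f : X →L[ℝ] ℝ), ‖f‖ = ‖x‖ → f x = ‖x‖ ^ 2 → 0 ≤ f (T x))
    {s : ℝ} (hs : 0 ≤ s) (x : X) : ‖x‖ ≤ ‖x + s • T x‖ := by
  rcases eq_or_ne x 0 with rfl | hx
  · simp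
  obtain ⟨g, hg1, hgx⟩ := exists_dual_vector ℝ x (norm_ne_zero_iff.mpr hx)
  have hfx : (0:ℝ) ≤ g (T x) := by
    have h := hd x (‖x‖ • g)
      (by rw [norm_smul (α := ℝ) (β := X →L[ℝ] ℝ)]; simp [hg1])
      (by simp [hgx, sq])
    simp only [ContinuousLinearMap.smul_apply, smul_eq_mul] at h
    have hxpos : (0:ℝ) < ‖x‖ := norm_pos_iff.mpr hx
    nlinarith
  calc ‖x‖ = g x := hgx.symm
    _ ≤ g x + s * g (T x) := by nlinarith
    _ = g (x + s • T x) := by simp [mul_comm]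
    _ ≤ ‖g‖ * ‖x + s • T x‖ :=
        le_trans (le_abs_self _) (by rw [← Real.norm_eq_abs]; exact g.le_opNorm _)
    _ = ‖x + s • T x‖ := by rw [hg1, one_mul]

/-- Local estimate: `‖exp (-(s • T))‖ ≤ 1 + 7 * ‖s • T‖ ^ 2` for small `s ≥ 0`. -/
lemma local_est (T : X →L[ℝ] X)
    (hd : ∀ (x : X) (f : X →L[ℝ] ℝ), ‖f‖ = ‖x‖ → f x = ‖x‖ ^ 2 → 0 ≤ f (T x))
    {s : ℝ} (hs : 0 ≤ s) (hsm : ‖s • T‖ < 1) :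
    ‖exp (-(s • T))‖ ≤ 1 + 7 * ‖s • T‖ ^ 2 := by
  set A : X →L[ℝ] X := s • T with hA
  have ha0 : (0:ℝ) ≤ ‖A‖ := norm_nonneg _
  have ha1 : ‖A‖ ≤ 1 := le_of_lt hsm
  -- the unit 1 + A = 1 - (-A)
  have hu : IsUnit ((1 : X →L[ℝ] X) - (-A)) :=
    isUnit_one_sub_of_norm_lt_one (by rwa [norm_neg])
  obtain ⟨u, hu'⟩ := hu
  have huval : (u : X →L[ℝ] X) = 1 + A := by rw [hu', sub_neg_eq_add]
  -- inverse is a contraction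
  have hinv : ∀ z : X, ‖(↑u⁻¹ : X →L[ℝ] X) z‖ ≤ ‖z‖ := by
    intro z
    set x := (↑u⁻¹ : X →L[ℝ] X) z with hx
    have hxz : (1 + A) x = z := by
      rw [← huval]
      show ((↑u : X →L[ℝ] X) * (↑u⁻¹ : X →L[ℝ] X)) z = z
      rw [u.mul_inv]
      rfl
    have := diss_ineq T hd hs x
    rwa [show x + s • T x = (1 + A) x by
      simp [hA, ContinuousLinearMap.add_apply], hxz] at this
  -- the perturbation estimate
  have hR : ‖exp (-A) - 1 - (-A)‖ ≤ ‖A‖ ^ 2 * Real.exp ‖A‖ := by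
    simpa [norm_neg] using exp_tail_bound' (-A)
  have hkey : ‖(1 + A) * exp (-A) - 1‖ ≤ 7 * ‖A‖ ^ 2 := by
    set R := exp (-A) - 1 - (-A) with hRdef
    have hexpand : (1 + A) * exp (-A) - 1 = R + A * R - A * A := by
      have h5 : exp (-A) = 1 + (-A) + R := by rw [hRdef]; abel
      rw [h5]; noncomm_ring
    rw [hexpand]
    have hAR : ‖A * R‖ ≤ ‖A‖ * ‖R‖ := norm_mul_le _ _
    have hAA : ‖A * A‖ ≤ ‖A‖ * ‖A‖ := norm_mul_le _ _
    have he : Real.exp ‖A‖ ≤ 3 := by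
      calc Real.exp ‖A‖ ≤ Real.exp 1 := Real.exp_le_exp.mpr ha1
        _ ≤ 3 := by
          have := Real.exp_one_lt_d9
          linarith
    have hRb : ‖R‖ ≤ 3 * ‖A‖ ^ 2 := by nlinarith
    calc ‖R + A * R - A * A‖ ≤ ‖R‖ + ‖A * R‖ + ‖A * A‖ := by
          refine le_trans (norm_sub_le _ _) ?_
          gcongr
          exact norm_add_le _ _
      _ ≤ 7 * ‖A‖ ^ 2 := by nlinarith
  -- combine
  refine ContinuousLinearMap.opNorm_le_bound _ (by positivity) fun y => ?_
  have hfac : exp (-A) y = (↑u⁻¹ : X →L[ℝ] X) (((1 + A) * exp (-A)) y) := by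
    have : (↑u⁻¹ * ((1 + A) * exp (-A)) : X →L[ℝ] X) = exp (-A) := by
      rw [← huval, ← mul_assoc, u.inv_mul, one_mul]
    conv_lhs => rw [← this]
    rfl
  rw [hfac]
  calc ‖(↑u⁻¹ : X →L[ℝ] X) (((1 + A) * exp (-A)) y)‖
      ≤ ‖((1 + A) * exp (-A)) y‖ := hinv _
    _ ≤ ‖(1 + A) * exp (-A)‖ * ‖y‖ := ContinuousLinearMap.le_opNorm _ _
    _ ≤ (1 + 7 * ‖A‖ ^ 2) * ‖y‖ := by
        gcongr
        calc ‖(1 + A) * exp (-A)‖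
            ≤ ‖(1:X →L[ℝ] X)‖ + ‖(1 + A) * exp (-A) - 1‖ := by
              have := norm_add_le (1 : X →L[ℝ] X) ((1 + A) * exp (-A) - 1)
              simpa using this
          _ ≤ 1 + 7 * ‖A‖ ^ 2 := by
              have h1le : ‖(1:X →L[ℝ] X)‖ ≤ 1 := by
                simpa [ContinuousLinearMap.one_def] using
                  (ContinuousLinearMap.norm_id_le (E := X))
              linarith [hkey]

end auxsec

/-- Lumer–Phillips: `‖exp(−αT)‖ ≤ 1` for all `α ≥ 0` iff every norming
functional of every point is nonnegative on `T`. -/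
theorem stmt1 {X : Type*} [NormedAddCommGroup X] [NormedSpace ℝ X] [CompleteSpace X]
    (T : X →L[ℝ] X) :
    (∀ α : ℝ, 0 ≤ α → ‖NormedSpace.exp (-(α • T))‖ ≤ 1) ↔
      (∀ (x : X) (f : X →L[ℝ] ℝ), ‖f‖ = ‖x‖ → f x = ‖x‖ ^ 2 → 0 ≤ f (T x)) := by
  open NormedSpace in
  constructor
  · -- forward: semigroup contraction ⇒ dissipative
    intro hexp x f hf1 hf2
    set Φ : (X →L[ℝ] X) →L[ℝ] ℝ := f.comp ((ContinuousLinearMap.apply ℝ X) x) with hΦ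
    have hΦap : ∀ B : X →L[ℝ] X, Φ B = f (B x) := fun B => rfl
    have h1 := hasDerivAt_exp_smul_const (𝕂 := ℝ) (-T) (0 : ℝ)
    have h2 : HasDerivAt (fun t : ℝ => Φ (exp (t • (-T))))
        (Φ (exp ((0 : ℝ) • (-T)) * (-T))) 0 :=
      (Φ.hasFDerivAt).comp_hasDerivAt 0 h1
    have hd0 : Φ (exp ((0 : ℝ) • (-T)) * (-T)) = -(f (T x)) := by
      rw [hΦap]
      simp [zero_smul, exp_zero]
    have hslope : ∀ᶠ t in nhdsWithin (0:ℝ) (Set.Ioi 0),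
        slope (fun t : ℝ => Φ (exp (t • (-T)))) 0 t ≤ 0 := by
      filter_upwards [self_mem_nhdsWithin] with t ht
      have ht' : (0:ℝ) < t := ht
      have hb : ‖exp (-(t • T))‖ ≤ 1 := hexp t ht'.le
      set E : X →L[ℝ] X := exp (t • (-T)) with hE
      have hEeq : E = exp (-(t • T)) := by rw [hE, smul_neg]
      have hgt : Φ E ≤ ‖x‖ ^ 2 := by
        rw [hΦap]
        calc f (E x) ≤ |f (E x)| := le_abs_self _
          _ ≤ ‖f‖ * ‖E x‖ := by rw [← Real.norm_eq_abs]; exact f.le_opNorm _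
          _ = ‖x‖ * ‖E x‖ := by rw [hf1]
          _ ≤ ‖x‖ * (1 * ‖x‖) := by
              refine mul_le_mul_of_nonneg_left ?_ (norm_nonneg x)
              refine le_trans (E.le_opNorm x) ?_
              have : ‖E‖ ≤ 1 := by rw [hEeq]; exact hb
              exact mul_le_mul_of_nonneg_right this (norm_nonneg x)
          _ = ‖x‖ ^ 2 := by ring
      have hg0 : Φ (exp ((0:ℝ) • (-T))) = ‖x‖ ^ 2 := by
        rw [hΦap]; simp [zero_smul, exp_zero, hf2]
      rw [slope_def_field]
      rw [div_eq_mul_inv]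
      apply mul_nonpos_of_nonpos_of_nonneg
      · rw [sub_nonpos, ← hE]
        exact hgt.trans_eq hg0.symm
      · rw [sub_zero]
        positivity
    have hmono : nhdsWithin (0:ℝ) (Set.Ioi 0) ≤ nhdsWithin (0:ℝ) {(0:ℝ)}ᶜ :=
      nhdsWithin_mono _ (fun t ht => ne_of_gt ht)
    have htend := (hasDerivAt_iff_tendsto_slope.mp h2).mono_left hmono
    have hle : Φ (exp ((0 : ℝ) • (-T)) * (-T)) ≤ 0 := le_of_tendsto htend hslope
    rw [hd0] at hle
    linarith
  · -- backward: dissipative ⇒ contraction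
    intro hd α hα
    have hseq : Filter.Tendsto (fun n : ℕ => Real.exp (7 * (α ^ 2 * ‖T‖ ^ 2) / n))
        Filter.atTop (nhds 1) := by
      have h0 : Filter.Tendsto (fun n : ℕ => 7 * (α ^ 2 * ‖T‖ ^ 2) / n)
          Filter.atTop (nhds 0) := tendsto_const_div_atTop_nhds_zero_nat _
      have := (Real.continuous_exp.tendsto 0).comp h0
      simpa [Function.comp_def] using this
    refine ge_of_tendsto hseq ?_
    rw [Filter.eventually_atTop]
    refine ⟨⌈α * ‖T‖⌉₊ + 1, fun n hn => ?_⟩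
    have hn0 : 0 < n := by omega
    have hnR : (0:ℝ) < n := by exact_mod_cast hn0
    have haTn : α * ‖T‖ < n := by
      calc α * ‖T‖ ≤ (⌈α * ‖T‖⌉₊ : ℝ) := Nat.le_ceil _
        _ < n := by exact_mod_cast hn
    set s : ℝ := α / n with hs
    have hs0 : 0 ≤ s := by positivity
    have hnorm : ‖s • T‖ = s * ‖T‖ := by
      rw [norm_smul (α := ℝ) (β := X →L[ℝ] X), Real.norm_eq_abs, abs_of_nonneg hs0]
    have hsm : ‖s • T‖ < 1 := by
      rw [hnorm, hs]
      rw [div_mul_eq_mul_div, div_lt_one hnR]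
      exact haTn
    have hexp_eq : exp (-(α • T)) = (exp (-(s • T))) ^ n := by
      let _ : NormedAlgebra ℚ (X →L[ℝ] X) := .restrictScalars ℚ ℝ (X →L[ℝ] X)
      rw [← exp_nsmul]
      congr 1
      rw [smul_neg, neg_inj]
      have hna : ((n:ℝ)) * s = α := by rw [hs]; field_simp
      rw [← Nat.cast_smul_eq_nsmul ℝ, smul_smul, hna]
    calc ‖exp (-(α • T))‖ = ‖(exp (-(s • T))) ^ n‖ := by rw [hexp_eq]
      _ ≤ ‖exp (-(s • T))‖ ^ n := norm_pow_le' _ hn0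
      _ ≤ (1 + 7 * ‖s • T‖ ^ 2) ^ n :=
          pow_le_pow_left₀ (norm_nonneg _) (local_est T hd hs0 hsm) n
      _ ≤ (Real.exp (7 * ‖s • T‖ ^ 2)) ^ n := by
          apply pow_le_pow_left₀ (by positivity)
          linarith [Real.add_one_le_exp (7 * ‖s • T‖ ^ 2)]
      _ = Real.exp (n * (7 * ‖s • T‖ ^ 2)) := (Real.exp_nat_mul _ n).symm
      _ = Real.exp (7 * (α ^ 2 * ‖T‖ ^ 2) / n) := by
          congr 1
          rw [hnorm, hs]
          field_simp
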